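/- Let H be an M×N matrix with nonnegative entries and y ∈ {0,1}^M. If any solution to T(Hz) = y with z ∈ {0,1}^N exists, then x_max = ¬T(Hᵀ(¬y)) is the unique solution of maximal squared Euclidean norm: for every solution z, ‖z‖₂² ≤ ‖x_max‖₂², with equality only if z = x_max. -/

import Mathlib

open Finset

/-- Positivity thresholding operator. -/
noncomputable def T {K : ℕ} (v : Fin K → ℝ) : Fin K → ℝ := fun k => if 0 < v k then 1 else 0

/-- Entrywise Boolean negation (swaps 0 and 1 on binary vectors). -/
def bneg {K : ℕ} (v : Fin K → ℝ) : Fin K → ℝ := fun k => 1 - v k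

/-- Matrix-vector product. -/
def mulv {M N : ℕ} (H : Fin M → Fin N → ℝ) (x : Fin N → ℝ) : Fin M → ℝ :=
  fun m => ∑ n, H m n * x n

/-- Transpose. -/
def tr {M N : ℕ} (H : Fin M → Fin N → ℝ) : Fin N → Fin M → ℝ := fun n m => H m n

/-- Silhouette operator. -/
noncomputable def S {M N : ℕ} (H : Fin M → Fin N → ℝ) (x : Fin N → ℝ) : Fin M → ℝ := T (mulv H x)

/-- Maximal solution candidate. -/
noncomputable def xmax {M N : ℕ} (H : Fin M → Fin N → ℝ) (y : Fin M → ℝ) : Fin N → ℝ :=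
  bneg (T (mulv (tr H) (bneg y)))

/-- A vector is binary if each entry is 0 or 1. -/
def IsBin {K : ℕ} (v : Fin K → ℝ) : Prop := ∀ k, v k = 0 ∨ v k = 1

theorem stmt_6 {M N : ℕ} (H : Fin M → Fin N → ℝ) (hH : ∀ m n, 0 ≤ H m n)
    (y : Fin M → ℝ) (hy : IsBin y)
    (hex : ∃ z : Fin N → ℝ, IsBin z ∧ S H z = y) :
    ∀ z : Fin N → ℝ, IsBin z → S H z = y →
      (∑ n, (z n) ^ 2 ≤ ∑ n, (xmax H y n) ^ 2) ∧
      ((∑ n, (z n) ^ 2 = ∑ n, (xmax H y n) ^ 2) → z = xmax H y) := by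
  intro z hz hzy
  have hxbin : ∀ n, xmax H y n = 0 ∨ xmax H y n = 1 := by
    intro n
    unfold xmax bneg T
    by_cases h : 0 < mulv (tr H) (fun k => 1 - y k) n <;> simp [h]
  have key : ∀ n, z n = 1 → xmax H y n = 1 := by
    intro n hn
    unfold xmax bneg T
    have hsum : mulv (tr H) (fun k => 1 - y k) n = 0 := by
      unfold mulv tr
      apply Finset.sum_eq_zero
      intro m _
      rcases hy m with hm | hm
      · -- y m = 0, show H m n = 0
        have h0 : S H z m = 0 := by rw [hzy, hm]
        unfold S T at h0
        have hnpos : ¬ 0 < mulv H z m := by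
          by_contra h; simp [h] at h0
        have hsum0 : mulv H z m = 0 := by
          have : 0 ≤ mulv H z m := by
            unfold mulv
            apply Finset.sum_nonneg
            intro k _
            have : 0 ≤ z k := by rcases hz k with h | h <;> simp [h]
            exact mul_nonneg (hH m k) this
          linarith [lt_of_le_of_ne this]
        have : H m n * z n = 0 := by
          unfold mulv at hsum0
          have := (Finset.sum_eq_zero_iff_of_nonneg (fun k _ => by
            have : 0 ≤ z k := by rcases hz k with h | h <;> simp [h]
            exact mul_nonneg (hH m k) this)).mp hsum0 n (Finset.mem_univ n)
          exact this
        rw [hn, mul_one] at this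
        rw [this, zero_mul]
      · simp [hm]
    rw [hsum]
    norm_num
  have hle : ∀ n, z n ^ 2 ≤ xmax H y n ^ 2 := by
    intro n
    rcases hz n with h | h
    · rw [h]
      simpa using sq_nonneg (xmax H y n)
    · rw [key n h, h]
  constructor
  · exact Finset.sum_le_sum fun n _ => hle n
  · intro heq
    have heqn : ∀ n ∈ Finset.univ, z n ^ 2 = xmax H y n ^ 2 :=
      (Finset.sum_eq_sum_iff_of_le fun n _ => hle n).mp heq
    funext n
    have h2 := heqn n (Finset.mem_univ n)
    rcases hz n with h | h <;> rcases hxbin n with h' | h' <;>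
      rw [h, h'] <;> rw [h, h'] at h2 <;> norm_num at h2
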